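/- arXiv:2303.17110 — 6 statements merged into one kernel-verified Lean document; each statement's English description precedes it below -/
import Mathlib

section
/- Let μ, μ' be in [0,1]^K and define the disjunctive cascading reward r(μ) = 1 - prod_{j=1}^K (1-μ_j) and triggering probabilities p_i(μ) = prod_{j=1}^{i-1} (1-μ_j). Then |r(μ') - r(μ)| <= sum_{i=1}^K p_i(μ) |μ_i - μ'_i|. -/
lemma Iio_succ_eq (n : ℕ) (i : Fin n) :
    Finset.Iio (i.succ) = Finset.cons 0 ((Finset.Iio i).map ⟨Fin.succ, Fin.succ_injective n⟩)
      (by simp [Fin.succ_ne_zero]) := by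
  ext j
  refine Fin.cases ?_ ?_ j
  · simp [Fin.succ_pos]
  · intro k
    simp [Fin.succ_lt_succ_iff, Fin.succ_ne_zero, (Fin.succ_injective n).eq_iff]

lemma prod_Iio_succ (n : ℕ) (i : Fin n) (f : Fin (n+1) → ℝ) :
    ∏ j ∈ Finset.Iio (i.succ), f j = f 0 * ∏ j ∈ Finset.Iio i, f j.succ := by
  rw [Iio_succ_eq, Finset.prod_cons, Finset.prod_map]
  rfl

lemma aux (K : ℕ) (μ μ' : Fin K → ℝ)
    (hμ : ∀ j, μ j ∈ Set.Icc (0:ℝ) 1) (hμ' : ∀ j, μ' j ∈ Set.Icc (0:ℝ) 1) :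
    |(∏ j, (1 - μ' j)) - ∏ j, (1 - μ j)| ≤
      ∑ i, (∏ j ∈ Finset.Iio i, (1 - μ j)) * |μ i - μ' i| := by
  induction K with
  | zero => simp
  | succ n ih =>
    have hb : 0 ≤ ∏ j : Fin n, (1 - μ' j.succ) :=
      Finset.prod_nonneg fun j _ => by linarith [(hμ' j.succ).2]
    have hb1 : ∏ j : Fin n, (1 - μ' j.succ) ≤ 1 := by
      apply Finset.prod_le_one
      · intro j _; linarith [(hμ' j.succ).2]
      · intro j _; linarith [(hμ' j.succ).1]
    have ha : 0 ≤ 1 - μ 0 := by linarith [(hμ 0).2]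
    have ihx := ih (fun j => μ j.succ) (fun j => μ' j.succ)
      (fun j => hμ j.succ) (fun j => hμ' j.succ)
    rw [Fin.prod_univ_succ, Fin.prod_univ_succ, Fin.sum_univ_succ]
    simp only [prod_Iio_succ]
    set B' := ∏ j : Fin n, (1 - μ' j.succ)
    set B := ∏ j : Fin n, (1 - μ j.succ)
    set S := ∑ i : Fin n, (∏ j ∈ Finset.Iio i, (1 - μ j.succ)) * |μ i.succ - μ' i.succ|
    have key : (1 - μ' 0) * B' - (1 - μ 0) * B
        = ((1 - μ' 0) - (1 - μ 0)) * B' + (1 - μ 0) * (B' - B) := by ring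
    have h1 : |((1 - μ' 0) - (1 - μ 0)) * B'| ≤ |μ 0 - μ' 0| := by
      rw [abs_mul, abs_of_nonneg hb,
        show (1 - μ' 0) - (1 - μ 0) = μ 0 - μ' 0 by ring]
      nlinarith [abs_nonneg (μ 0 - μ' 0)]
    have h2 : |(1 - μ 0) * (B' - B)| ≤ (1 - μ 0) * S := by
      rw [abs_mul, abs_of_nonneg ha]
      exact mul_le_mul_of_nonneg_left ihx ha
    have hIio0 : Finset.Iio (0 : Fin (n+1)) = ∅ := by
      ext j; simp [Fin.not_lt_zero]
    calc |(1 - μ' 0) * B' - (1 - μ 0) * B|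
        ≤ |((1 - μ' 0) - (1 - μ 0)) * B'| + |(1 - μ 0) * (B' - B)| := by
          rw [key]; exact abs_add_le _ _
      _ ≤ |μ 0 - μ' 0| + (1 - μ 0) * S := add_le_add h1 h2
      _ = _ := by
          rw [hIio0, Finset.prod_empty, one_mul, Finset.mul_sum]
          congr 1
          apply Finset.sum_congr rfl
          intro i _; ring

theorem stmt_3 (K : ℕ) (μ μ' : Fin K → ℝ)
    (hμ : ∀ j, μ j ∈ Set.Icc (0:ℝ) 1) (hμ' : ∀ j, μ' j ∈ Set.Icc (0:ℝ) 1) :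
    |(1 - ∏ j, (1 - μ' j)) - (1 - ∏ j, (1 - μ j))| ≤
      ∑ i, (∏ j ∈ Finset.Iio i, (1 - μ j)) * |μ i - μ' i| := by
  have h := aux K μ μ' hμ hμ'
  have : (1 - ∏ j, (1 - μ' j)) - (1 - ∏ j, (1 - μ j))
      = (∏ j, (1 - μ j)) - ∏ j, (1 - μ' j) := by ring
  rw [this, abs_sub_comm]
  exact h
end

section
/- Let μ, μ' be in [0,1]^K and define for each i the disjunctive triggering probability p_i(μ) = prod_{j=1}^{i-1} (1-μ_j). Then for every i, |p_i(μ') - p_i(μ)| <= sum_{j=1}^{i-1} p_j(μ) |μ_j - μ'_j|, and in particular |p_i(μ') - p_i(μ)| <= sum_{j=1}^K p_j(μ) |μ_j - μ'_j|. -/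
private lemma conv_prod {K : ℕ} (i : Fin K) (h : ℕ → ℝ) :
    ∏ j ∈ Finset.Iio i, h j.val = ∏ j ∈ Finset.range i.val, h j := by
  rw [← Nat.Iio_eq_range, ← Fin.map_valEmbedding_Iio, Finset.prod_map]
  rfl

private lemma conv_sum {K : ℕ} (i : Fin K) (h : ℕ → ℝ) :
    ∑ j ∈ Finset.Iio i, h j.val = ∑ j ∈ Finset.range i.val, h j := by
  rw [← Nat.Iio_eq_range, ← Fin.map_valEmbedding_Iio, Finset.sum_map]
  rfl

private lemma aux_nat (f g : ℕ → ℝ) (hf : ∀ j, f j ∈ Set.Icc (0:ℝ) 1)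
    (hg : ∀ j, g j ∈ Set.Icc (0:ℝ) 1) (n : ℕ) :
    |∏ j ∈ Finset.range n, (1 - g j) - ∏ j ∈ Finset.range n, (1 - f j)| ≤
      ∑ j ∈ Finset.range n, (∏ l ∈ Finset.range j, (1 - f l)) * |f j - g j| := by
  induction n with
  | zero => simp
  | succ n ih =>
    have hQf : (0:ℝ) ≤ ∏ l ∈ Finset.range n, (1 - f l) :=
      Finset.prod_nonneg fun l _ => by linarith [(hf l).2]
    rw [Finset.prod_range_succ, Finset.prod_range_succ, Finset.sum_range_succ]
    have key : (∏ j ∈ Finset.range n, (1 - g j)) * (1 - g n) -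
        (∏ j ∈ Finset.range n, (1 - f j)) * (1 - f n) =
        (1 - g n) * ((∏ j ∈ Finset.range n, (1 - g j)) - ∏ j ∈ Finset.range n, (1 - f j))
        + (∏ j ∈ Finset.range n, (1 - f j)) * (f n - g n) := by ring
    rw [key]
    calc _ ≤ |(1 - g n) * ((∏ j ∈ Finset.range n, (1 - g j)) - ∏ j ∈ Finset.range n, (1 - f j))|
          + |(∏ j ∈ Finset.range n, (1 - f j)) * (f n - g n)| := abs_add_le _ _
      _ ≤ (∑ j ∈ Finset.range n, (∏ l ∈ Finset.range j, (1 - f l)) * |f j - g j|)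
          + (∏ l ∈ Finset.range n, (1 - f l)) * |f n - g n| := by
          gcongr ?_ + ?_
          · rw [abs_mul]
            have h1 : |1 - g n| ≤ 1 := by
              rw [abs_le]; constructor <;> linarith [(hg n).1, (hg n).2]
            calc |1 - g n| * |(∏ j ∈ Finset.range n, (1 - g j)) - ∏ j ∈ Finset.range n, (1 - f j)|
                ≤ 1 * |(∏ j ∈ Finset.range n, (1 - g j)) - ∏ j ∈ Finset.range n, (1 - f j)| := by
                  gcongr
              _ = _ := one_mul _
              _ ≤ _ := ih
          · rw [abs_mul, abs_of_nonneg hQf]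

theorem stmt_4 (K : ℕ) (μ μ' : Fin K → ℝ)
    (hμ : ∀ j, μ j ∈ Set.Icc (0:ℝ) 1) (hμ' : ∀ j, μ' j ∈ Set.Icc (0:ℝ) 1) :
    ∀ i : Fin K,
      |(∏ j ∈ Finset.Iio i, (1 - μ' j)) - ∏ j ∈ Finset.Iio i, (1 - μ j)| ≤
          ∑ j ∈ Finset.Iio i, (∏ l ∈ Finset.Iio j, (1 - μ l)) * |μ j - μ' j| ∧
        |(∏ j ∈ Finset.Iio i, (1 - μ' j)) - ∏ j ∈ Finset.Iio i, (1 - μ j)| ≤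
          ∑ j, (∏ l ∈ Finset.Iio j, (1 - μ l)) * |μ j - μ' j| := by
  intro i
  set f : ℕ → ℝ := fun j => if h : j < K then μ ⟨j, h⟩ else 0 with hfdef
  set g : ℕ → ℝ := fun j => if h : j < K then μ' ⟨j, h⟩ else 0 with hgdef
  have hf : ∀ j, f j ∈ Set.Icc (0:ℝ) 1 := by
    intro j; simp only [hfdef]; split
    · exact hμ _
    · exact ⟨le_refl 0, zero_le_one⟩
  have hg : ∀ j, g j ∈ Set.Icc (0:ℝ) 1 := by
    intro j; simp only [hgdef]; split
    · exact hμ' _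
    · exact ⟨le_refl 0, zero_le_one⟩
  have hfeq : ∀ j : Fin K, f j.val = μ j := by
    intro j; simp [hfdef, j.isLt]
  have hgeq : ∀ j : Fin K, g j.val = μ' j := by
    intro j; simp [hgdef, j.isLt]
  have hprodf : ∀ k : Fin K, ∏ j ∈ Finset.Iio k, (1 - μ j) =
      ∏ j ∈ Finset.range k.val, (1 - f j) := by
    intro k
    rw [← conv_prod k (fun j => 1 - f j)]
    exact Finset.prod_congr rfl fun j _ => by rw [hfeq]
  have hprodg : ∏ j ∈ Finset.Iio i, (1 - μ' j) = ∏ j ∈ Finset.range i.val, (1 - g j) := by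
    rw [← conv_prod i (fun j => 1 - g j)]
    exact Finset.prod_congr rfl fun j _ => by rw [hgeq]
  have hsum : ∑ j ∈ Finset.Iio i, (∏ l ∈ Finset.Iio j, (1 - μ l)) * |μ j - μ' j| =
      ∑ j ∈ Finset.range i.val, (∏ l ∈ Finset.range j, (1 - f l)) * |f j - g j| := by
    rw [← conv_sum i (fun j => (∏ l ∈ Finset.range j, (1 - f l)) * |f j - g j|)]
    refine Finset.sum_congr rfl fun j _ => ?_
    rw [hfeq, hgeq, hprodf j]
  have hmain : |(∏ j ∈ Finset.Iio i, (1 - μ' j)) - ∏ j ∈ Finset.Iio i, (1 - μ j)| ≤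
      ∑ j ∈ Finset.Iio i, (∏ l ∈ Finset.Iio j, (1 - μ l)) * |μ j - μ' j| := by
    rw [hprodg, hprodf i, hsum]
    exact aux_nat f g hf hg i.val
  refine ⟨hmain, hmain.trans ?_⟩
  apply Finset.sum_le_sum_of_subset_of_nonneg (Finset.subset_univ _)
  intro j _ _
  exact mul_nonneg (Finset.prod_nonneg fun l _ => by linarith [(hμ l).2]) (abs_nonneg _)
end

section
/- For any μ, μ' in (0,1)^K and any decomposition μ' = μ + ζ + η with ζ, η in [-1,1]^K, if a reward function r satisfies the TPM 1-norm smoothness condition with coefficient B_1 (i.e., |r(μ') - r(μ)| <= B_1 sum_{i} p_i(μ) |μ_i - μ'_i| with p_i(μ) in [0,1] supported on a set of size at most K), then r satisfies the variance-modulated smoothness condition with coefficients (B_v, B_1) = (B_1 sqrt(K)/2, B_1): |r(μ') - r(μ)| <= (B_1 sqrt(K)/2) · sqrt( sum_i ζ_i^2 / (μ_i (1-μ_i)) ) + B_1 sum_i |η_i|. -/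
theorem stmt_7 (m K : ℕ) (μ μ' ζ η p : Fin m → ℝ) (r : (Fin m → ℝ) → ℝ) (B1 : ℝ)
    (hB1 : 0 ≤ B1)
    (hμ : ∀ i, μ i ∈ Set.Ioo (0:ℝ) 1) (hμ' : ∀ i, μ' i ∈ Set.Ioo (0:ℝ) 1)
    (hζ : ∀ i, ζ i ∈ Set.Icc (-1:ℝ) 1) (hη : ∀ i, η i ∈ Set.Icc (-1:ℝ) 1)
    (hdec : ∀ i, μ' i = μ i + ζ i + η i)
    (hp : ∀ i, p i ∈ Set.Icc (0:ℝ) 1)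
    (hsupp : (Finset.univ.filter fun i => p i ≠ 0).card ≤ K)
    (hTPM : |r μ' - r μ| ≤ B1 * ∑ i, p i * |μ i - μ' i|) :
    |r μ' - r μ| ≤
      B1 * Real.sqrt K / 2 * Real.sqrt (∑ i, (ζ i) ^ 2 / (μ i * (1 - μ i))) +
        B1 * ∑ i, |η i| := by
  have hv : ∀ i, 0 < μ i * (1 - μ i) := fun i =>
    mul_pos (hμ i).1 (by linarith [(hμ i).2])
  set v : Fin m → ℝ := fun i => μ i * (1 - μ i) with hvdef
  set f : Fin m → ℝ := fun i => p i * Real.sqrt (v i) with hfdef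
  set g : Fin m → ℝ := fun i => |ζ i| / Real.sqrt (v i) with hgdef
  have hsv : ∀ i, 0 < Real.sqrt (v i) := fun i => Real.sqrt_pos.mpr (hv i)
  have hfg : ∀ i, f i * g i = p i * |ζ i| := by
    intro i
    have hne : Real.sqrt (v i) ≠ 0 := (hsv i).ne'
    calc p i * Real.sqrt (v i) * (|ζ i| / Real.sqrt (v i))
        = p i * |ζ i| * (Real.sqrt (v i) / Real.sqrt (v i)) := by ring
      _ = p i * |ζ i| := by rw [div_self hne, mul_one]
  have CS : ∑ i, f i * g i ≤
      Real.sqrt (∑ i, f i ^ 2) * Real.sqrt (∑ i, g i ^ 2) :=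
    Real.sum_mul_le_sqrt_mul_sqrt Finset.univ f g
  have hf2 : ∑ i, f i ^ 2 ≤ (K : ℝ) / 4 := by
    have h1 : ∑ i, f i ^ 2 = ∑ i ∈ Finset.univ.filter (fun i => p i ≠ 0), f i ^ 2 := by
      rw [Finset.sum_filter_of_ne]
      intro i _ h
      intro hpz
      exact h (by simp [hfdef, hpz])
    rw [h1]
    calc ∑ i ∈ Finset.univ.filter (fun i => p i ≠ 0), f i ^ 2
        ≤ ∑ i ∈ Finset.univ.filter (fun i => p i ≠ 0), (1/4 : ℝ) := by
          apply Finset.sum_le_sum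
          intro i _
          have hp1 := (hp i).1
          have hp2 := (hp i).2
          have hvle : v i ≤ 1/4 := by
            show μ i * (1 - μ i) ≤ 1/4
            nlinarith [sq_nonneg (μ i - 1/2)]
          have : f i ^ 2 = p i ^ 2 * v i := by
            simp only [hfdef, mul_pow, Real.sq_sqrt (show 0 ≤ v i from (hv i).le)]
          rw [this]
          nlinarith [sq_nonneg (p i), (hv i).le]
      _ = (Finset.univ.filter (fun i => p i ≠ 0)).card * (1/4 : ℝ) := by
          rw [Finset.sum_const]; ring
      _ ≤ (K : ℝ) / 4 := by
          have : ((Finset.univ.filter (fun i => p i ≠ 0)).card : ℝ) ≤ (K : ℝ) := by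
            exact_mod_cast hsupp
          nlinarith
  have hg2 : ∑ i, g i ^ 2 = ∑ i, (ζ i) ^ 2 / v i := by
    apply Finset.sum_congr rfl
    intro i _
    rw [hgdef]
    rw [div_pow, Real.sq_sqrt (hv i).le, sq_abs]
  have hsqrtK : Real.sqrt ((K : ℝ) / 4) = Real.sqrt K / 2 := by
    rw [show ((K:ℝ)/4) = (K:ℝ) * (1/2:ℝ)^2 by ring,
      Real.sqrt_mul (Nat.cast_nonneg K), Real.sqrt_sq (by norm_num : (0:ℝ) ≤ 1/2)]
    ring
  have key : ∑ i, p i * |ζ i| ≤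
      Real.sqrt K / 2 * Real.sqrt (∑ i, (ζ i) ^ 2 / v i) := by
    calc ∑ i, p i * |ζ i| = ∑ i, f i * g i := by
          exact Finset.sum_congr rfl fun i _ => (hfg i).symm
      _ ≤ Real.sqrt (∑ i, f i ^ 2) * Real.sqrt (∑ i, g i ^ 2) := CS
      _ ≤ Real.sqrt ((K:ℝ)/4) * Real.sqrt (∑ i, (ζ i) ^ 2 / v i) := by
          rw [hg2]
          apply mul_le_mul_of_nonneg_right (Real.sqrt_le_sqrt hf2) (Real.sqrt_nonneg _)
      _ = Real.sqrt K / 2 * Real.sqrt (∑ i, (ζ i) ^ 2 / v i) := by rw [hsqrtK]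
  have keta : ∑ i, p i * |η i| ≤ ∑ i, |η i| := by
    apply Finset.sum_le_sum
    intro i _
    nlinarith [(hp i).1, (hp i).2, abs_nonneg (η i)]
  have hsplit : ∑ i, p i * |μ i - μ' i| ≤ ∑ i, p i * |ζ i| + ∑ i, p i * |η i| := by
    rw [← Finset.sum_add_distrib]
    apply Finset.sum_le_sum
    intro i _
    have : |μ i - μ' i| ≤ |ζ i| + |η i| := by
      rw [hdec i]
      calc |μ i - (μ i + ζ i + η i)| = |-(ζ i + η i)| := by ring_nf
        _ = |ζ i + η i| := abs_neg _
        _ ≤ |ζ i| + |η i| := abs_add_le _ _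
    nlinarith [(hp i).1, abs_nonneg (ζ i), abs_nonneg (η i)]
  calc |r μ' - r μ| ≤ B1 * ∑ i, p i * |μ i - μ' i| := hTPM
    _ ≤ B1 * (∑ i, p i * |ζ i| + ∑ i, p i * |η i|) :=
        mul_le_mul_of_nonneg_left hsplit hB1
    _ ≤ B1 * (Real.sqrt K / 2 * Real.sqrt (∑ i, (ζ i) ^ 2 / v i) + ∑ i, |η i|) := by
        apply mul_le_mul_of_nonneg_left _ hB1
        exact add_le_add key keta
    _ = B1 * Real.sqrt K / 2 * Real.sqrt (∑ i, (ζ i) ^ 2 / (μ i * (1 - μ i))) +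
        B1 * ∑ i, |η i| := by rw [hvdef]; ring
end

section
/- Let γ > 0, G_1 = γ I, and for t = 1, ..., T let G_{t+1} = G_t + sum_{i in τ_t} φ_t(i) φ_t(i)^T, where each τ_t is a finite index set of size at most K and ||φ_t(i)||_2 <= 1 for all t, i. If γ >= K, then sum_{t=1}^T sum_{i in τ_t} ||φ_t(i)||^2_{G_t^{-1}} <= 2 d log(1 + K T/(γ d)). -/
open Matrix

private theorem ellip_prodOneAdd {ι : Type*} (s : Finset ι) (f : ι → ℝ)
    (h : ∀ i ∈ s, 0 ≤ f i) : 1 + ∑ i ∈ s, f i ≤ ∏ i ∈ s, (1 + f i) := by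
  classical
  induction s using Finset.induction with
  | empty => simp
  | @insert a s' hx ih =>
    rw [Finset.sum_insert hx, Finset.prod_insert hx]
    have ha : 0 ≤ f a := h a (Finset.mem_insert_self a s')
    have hs : ∀ i ∈ s', 0 ≤ f i := fun i hi => h i (Finset.mem_insert_of_mem hi)
    have hsum : 0 ≤ ∑ i ∈ s', f i := Finset.sum_nonneg hs
    nlinarith [ih hs]

private theorem ellip_twoLog (x : ℝ) (h0 : 0 ≤ x) (h1 : x ≤ 1) :
    x ≤ 2 * Real.log (1 + x) := by
  have hpos : (0:ℝ) < 1 + x := by linarith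
  have h2 : Real.exp (x/2) ≤ 1 + x := by
    have hne : (0:ℝ) < 1 - x/2 := by linarith
    have he : 1 - x/2 ≤ Real.exp (-(x/2)) := by
      have := Real.add_one_le_exp (-(x/2)); linarith
    have hexp : Real.exp (x/2) ≤ 1/(1 - x/2) := by
      rw [le_div_iff₀ hne]
      calc Real.exp (x/2) * (1 - x/2) ≤ Real.exp (x/2) * Real.exp (-(x/2)) :=
            mul_le_mul_of_nonneg_left he (Real.exp_pos _).le
        _ = 1 := by rw [← Real.exp_add]; simp
    have h3 : 1/(1-x/2) ≤ 1 + x := by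
      rw [div_le_iff₀ hne]; nlinarith
    linarith
  have := Real.le_log_iff_exp_le hpos |>.mpr h2
  linarith

private theorem ellip_traceEigen {d : ℕ} (H : Matrix (Fin d) (Fin d) ℝ) (hh : H.IsHermitian) :
    H.trace = ∑ i, hh.eigenvalues i := by
  classical
  have := congrArg Matrix.trace hh.spectral_theorem
  rw [Unitary.conjStarAlgAut_apply, Matrix.trace_mul_cycle,
    (Matrix.mem_unitaryGroup_iff').mp hh.eigenvectorUnitary.2, Matrix.one_mul,
    Matrix.trace_diagonal] at this
  simpa using this

private theorem ellip_detOneAdd {d : ℕ} (H : Matrix (Fin d) (Fin d) ℝ) (hH : H.PosSemidef) :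
    1 + H.trace ≤ (1 + H).det := by
  classical
  have hh := hH.isHermitian
  set U : Matrix (Fin d) (Fin d) ℝ := (hh.eigenvectorUnitary : Matrix (Fin d) (Fin d) ℝ) with hU
  have hUU : U * star U = 1 := (Matrix.mem_unitaryGroup_iff).mp hh.eigenvectorUnitary.2
  have hUU' : star U * U = 1 := (Matrix.mem_unitaryGroup_iff').mp hh.eigenvectorUnitary.2
  set D : Matrix (Fin d) (Fin d) ℝ := diagonal (RCLike.ofReal ∘ hh.eigenvalues) with hD
  have hspec : H = U * D * star U := hh.spectral_theorem
  have hone : (1 : Matrix (Fin d) (Fin d) ℝ) + H = U * (1 + D) * star U := by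
    rw [Matrix.mul_add, Matrix.add_mul, Matrix.mul_one, hUU, ← hspec]
  have hdetU : U.det * (star U).det = 1 := by
    rw [← Matrix.det_mul, hUU, Matrix.det_one]
  have hdet : (1 + H).det = (1 + D).det := by
    rw [hone, Matrix.det_mul, Matrix.det_mul]
    calc U.det * (1 + D).det * (star U).det
        = (1 + D).det * (U.det * (star U).det) := by ring
      _ = (1 + D).det := by rw [hdetU, mul_one]
  have htr : H.trace = ∑ i, hh.eigenvalues i := ellip_traceEigen H hh
  have hdd : (1 + D).det = ∏ i, (1 + hh.eigenvalues i) := by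
    rw [hD, ← Matrix.diagonal_one, Matrix.diagonal_add, Matrix.det_diagonal]
    simp
  rw [hdet, hdd, htr]
  exact ellip_prodOneAdd _ _ (fun i _ => hH.eigenvalues_nonneg i)

open scoped MatrixOrder in
private theorem ellip_detStep {d : ℕ} (G S : Matrix (Fin d) (Fin d) ℝ)
    (hG : G.PosDef) (hS : S.PosSemidef) :
    G.det * (1 + (G⁻¹ * S).trace) ≤ (G + S).det := by
  classical
  have hGinv : (G⁻¹).PosDef := hG.inv
  set R := CFC.sqrt (G⁻¹) with hR
  have hRR : R * R = G⁻¹ := CFC.sqrt_mul_sqrt_self _ hGinv.posSemidef.nonneg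
  have hRH : R.IsHermitian := (CFC.sqrt_nonneg _).posSemidef.isHermitian
  have hM : (R * S * R).PosSemidef := by
    have := hS.mul_mul_conjTranspose_same R
    rwa [hRH.eq] at this
  have hsplit : G + S = G * (1 + G⁻¹ * S) := by
    rw [Matrix.mul_add, Matrix.mul_one, ← Matrix.mul_assoc,
      Matrix.mul_nonsing_inv _ (isUnit_iff_isUnit_det _ |>.1 hG.isUnit), Matrix.one_mul]
  have hdet1 : (1 + G⁻¹ * S).det = (1 + R * S * R).det := by
    rw [← hRR, Matrix.mul_assoc]
    rw [Matrix.det_one_add_mul_comm]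
  have htr : (R * S * R).trace = (G⁻¹ * S).trace := by
    rw [Matrix.trace_mul_cycle, hRR]
  calc G.det * (1 + (G⁻¹ * S).trace) = G.det * (1 + (R * S * R).trace) := by rw [htr]
    _ ≤ G.det * (1 + R * S * R).det :=
        mul_le_mul_of_nonneg_left (ellip_detOneAdd _ hM) hG.det_pos.le
    _ = (G + S).det := by rw [hsplit, Matrix.det_mul, hdet1]

private theorem ellip_vvPSD {d : ℕ} (v : Fin d → ℝ) : (vecMulVec v v).PosSemidef := by
  refine Matrix.PosSemidef.of_dotProduct_mulVec_nonneg ?_ ?_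
  · ext i j; simp [Matrix.vecMulVec_apply, Matrix.conjTranspose_apply, mul_comm]
  · intro x
    have : star x ⬝ᵥ (vecMulVec v v) *ᵥ x = (v ⬝ᵥ x) * (v ⬝ᵥ x) := by
      simp [dotProduct, Matrix.mulVec, Matrix.vecMulVec_apply, Finset.mul_sum,
        Finset.sum_mul, mul_assoc]
      rw [Finset.sum_comm]
      apply Finset.sum_congr rfl; intros; apply Finset.sum_congr rfl; intros; ring
    rw [this]
    exact mul_self_nonneg _

private theorem ellip_traceMul {d : ℕ} (A : Matrix (Fin d) (Fin d) ℝ) (v : Fin d → ℝ) :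
    (A * vecMulVec v v).trace = v ⬝ᵥ A *ᵥ v := by
  simp [Matrix.trace, Matrix.diag, Matrix.mul_apply, Matrix.vecMulVec_apply,
    dotProduct, Matrix.mulVec, Finset.mul_sum]
  apply Finset.sum_congr rfl; intros; apply Finset.sum_congr rfl; intros; ring

private theorem ellip_sumPSD {d : ℕ} (s : Finset ℕ) (f : ℕ → Matrix (Fin d) (Fin d) ℝ)
    (h : ∀ i ∈ s, (f i).PosSemidef) : (∑ i ∈ s, f i).PosSemidef := by
  classical
  induction s using Finset.induction with
  | empty => simpa using Matrix.PosSemidef.zero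
  | @insert a s' hx ih =>
    rw [Finset.sum_insert hx]
    exact (h a (Finset.mem_insert_self a s')).add
      (ih fun i hi => h i (Finset.mem_insert_of_mem hi))

private theorem ellip_quadInvBound {d : ℕ} (γ : ℝ) (hγ : 0 < γ)
    (G : Matrix (Fin d) (Fin d) ℝ) (hG : G.PosDef)
    (hQ : ∀ w : Fin d → ℝ, γ * (w ⬝ᵥ w) ≤ w ⬝ᵥ G *ᵥ w) (v : Fin d → ℝ) :
    v ⬝ᵥ G⁻¹ *ᵥ v ≤ (v ⬝ᵥ v) / γ := by
  classical
  set w := G⁻¹ *ᵥ v with hw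
  have hGw : G *ᵥ w = v := by
    rw [hw, Matrix.mulVec_mulVec, Matrix.mul_nonsing_inv _ (isUnit_iff_isUnit_det _ |>.1 hG.isUnit),
      Matrix.one_mulVec]
  have ht0 : 0 ≤ v ⬝ᵥ w := by
    have := hG.inv.posSemidef.dotProduct_mulVec_nonneg v
    simpa [hw, Matrix.star_eq_conjTranspose] using this
  have h1 : γ * (w ⬝ᵥ w) ≤ v ⬝ᵥ w := by
    have := hQ w
    rwa [hGw, dotProduct_comm w v] at this
  have hCS : (v ⬝ᵥ w) ^ 2 ≤ (v ⬝ᵥ v) * (w ⬝ᵥ w) := by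
    have := Finset.sum_mul_sq_le_sq_mul_sq Finset.univ v w
    simpa [dotProduct, pow_two, Finset.mul_sum] using this
  have hvv : 0 ≤ v ⬝ᵥ v := by
    simpa [dotProduct, pow_two] using
      Finset.sum_nonneg (fun i (_ : i ∈ Finset.univ) => mul_self_nonneg (v i))
  rcases eq_or_lt_of_le ht0 with h | h
  · rw [← h]; positivity
  · have h2 : (v ⬝ᵥ w)^2 ≤ (v ⬝ᵥ v) * ((v ⬝ᵥ w)/γ) := by
      calc (v ⬝ᵥ w)^2 ≤ (v ⬝ᵥ v) * (w ⬝ᵥ w) := hCS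
        _ ≤ (v ⬝ᵥ v) * ((v ⬝ᵥ w)/γ) := by
            apply mul_le_mul_of_nonneg_left _ hvv
            rw [le_div_iff₀ hγ]; linarith
    have h3 : (v ⬝ᵥ w * γ) * (v ⬝ᵥ w) ≤ (v ⬝ᵥ v) * (v ⬝ᵥ w) := by
      have := mul_le_mul_of_nonneg_right h2 hγ.le
      have hexp : (v ⬝ᵥ v) * ((v ⬝ᵥ w)/γ) * γ = (v ⬝ᵥ v) * (v ⬝ᵥ w) := by field_simp
      nlinarith
    have h4 : v ⬝ᵥ w * γ ≤ v ⬝ᵥ v := le_of_mul_le_mul_right h3 h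
    rw [le_div_iff₀ hγ]; linarith

private theorem ellip_detTrace {d : ℕ} (hd : 0 < d) (H : Matrix (Fin d) (Fin d) ℝ)
    (hH : H.PosSemidef) : H.det ≤ (H.trace / d) ^ d := by
  classical
  have hh := hH.isHermitian
  have hdet : H.det = ∏ i, hh.eigenvalues i := by
    have := hh.det_eq_prod_eigenvalues
    simpa using this
  have htr : H.trace = ∑ i, hh.eigenvalues i := ellip_traceEigen H hh
  have hnn : ∀ i ∈ Finset.univ, (0:ℝ) ≤ hh.eigenvalues i := fun i _ => hH.eigenvalues_nonneg i
  have hAM : ∏ i, (hh.eigenvalues i) ^ ((d:ℝ)⁻¹) ≤ ∑ i, ((d:ℝ)⁻¹) * hh.eigenvalues i := by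
    apply Real.geom_mean_le_arith_mean_weighted _ _ _ (fun i _ => by positivity) _ hnn
    simp [Finset.card_univ]
    field_simp
  have hdne : (d:ℝ) ≠ 0 := Nat.cast_ne_zero.mpr hd.ne'
  have hprod : (∏ i, (hh.eigenvalues i) ^ ((d:ℝ)⁻¹)) ^ (d:ℕ) = ∏ i, hh.eigenvalues i := by
    rw [← Finset.prod_pow]
    apply Finset.prod_congr rfl
    intro i _
    rw [← Real.rpow_natCast ((hh.eigenvalues i) ^ ((d:ℝ)⁻¹)) d,
      ← Real.rpow_mul (hH.eigenvalues_nonneg i), inv_mul_cancel₀ hdne, Real.rpow_one]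
  have hsum : ∑ i, ((d:ℝ)⁻¹) * hh.eigenvalues i = H.trace / d := by
    rw [htr, ← Finset.mul_sum]; ring
  calc H.det = (∏ i, (hh.eigenvalues i) ^ ((d:ℝ)⁻¹)) ^ (d:ℕ) := by rw [hprod, hdet]
    _ ≤ (∑ i, ((d:ℝ)⁻¹) * hh.eigenvalues i) ^ (d:ℕ) := by
        apply pow_le_pow_left₀ _ hAM
        exact Finset.prod_nonneg fun i _ => Real.rpow_nonneg (hH.eigenvalues_nonneg i) _
    _ = (H.trace / d) ^ d := by rw [hsum]

open Matrix in
theorem stmt_9 (d K T : ℕ) (γ : ℝ) (hγ : 0 < γ) (hγK : (K : ℝ) ≤ γ)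
    (τ : Fin T → Finset ℕ) (φ : Fin T → ℕ → Fin d → ℝ)
    (hτ : ∀ t, (τ t).card ≤ K)
    (hφ : ∀ t, ∀ i ∈ τ t, ∑ j, (φ t i j) ^ 2 ≤ 1)
    (G : Fin (T + 1) → Matrix (Fin d) (Fin d) ℝ)
    (hG0 : G 0 = γ • (1 : Matrix (Fin d) (Fin d) ℝ))
    (hrec : ∀ t : Fin T,
      G t.succ = G t.castSucc + ∑ i ∈ τ t, Matrix.vecMulVec (φ t i) (φ t i)) :
    ∑ t : Fin T, ∑ i ∈ τ t, φ t i ⬝ᵥ (G t.castSucc)⁻¹.mulVec (φ t i) ≤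
      2 * d * Real.log (1 + K * T / (γ * d)) := by
  classical
  rcases Nat.eq_zero_or_pos d with hd0 | hd
  · subst hd0
    have hlhs : ∑ t : Fin T, ∑ i ∈ τ t, φ t i ⬝ᵥ (G t.castSucc)⁻¹.mulVec (φ t i) = 0 := by
      apply Finset.sum_eq_zero; intro t _
      apply Finset.sum_eq_zero; intro i _
      simp [dotProduct]
    rw [hlhs]
    simp
  -- main case
  set g : ℕ → Matrix (Fin d) (Fin d) ℝ := fun n => G ⟨min n T, by omega⟩ with hgdef
  have hgval : ∀ (a : ℕ) (h : a ≤ T), g a = G ⟨a, by omega⟩ := by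
    intro a h
    simp only [hgdef]
    exact congrArg G (Fin.ext (Nat.min_eq_left h))
  have hg0 : g 0 = γ • (1 : Matrix (Fin d) (Fin d) ℝ) := by
    rw [hgval 0 (Nat.zero_le T), ← hG0]
    exact congrArg G (Fin.ext (by simp))
  -- step matrices
  set S : ℕ → Matrix (Fin d) (Fin d) ℝ := fun n =>
    if h : n < T then ∑ i ∈ τ ⟨n, h⟩, Matrix.vecMulVec (φ ⟨n, h⟩ i) (φ ⟨n, h⟩ i) else 0
    with hSdef
  have hSpsd : ∀ n, (S n).PosSemidef := by
    intro n
    simp only [hSdef]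
    split
    · exact ellip_sumPSD _ _ (fun i _ => ellip_vvPSD _)
    · exact Matrix.PosSemidef.zero
  have hgsucc : ∀ n, n < T → g (n + 1) = g n + S n := by
    intro n h
    have h1 : g (n + 1) = G (⟨n, h⟩ : Fin T).succ := by
      rw [hgval (n+1) (by omega)]
      exact congrArg G (Fin.ext rfl)
    have h2 : g n = G (⟨n, h⟩ : Fin T).castSucc := by
      rw [hgval n (by omega)]
      exact congrArg G (Fin.ext rfl)
    rw [h1, h2, hrec ⟨n, h⟩]
    congr 1
    simp only [hSdef, dif_pos h]
  have hgstall : ∀ n, T ≤ n → g (n + 1) = g n := by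
    intro n h
    simp only [hgdef]
    exact congrArg G (Fin.ext (by
      simp [Nat.min_eq_right h, Nat.min_eq_right (by omega : T ≤ n + 1)]))
  have hStr : ∀ n, (S n).trace ≤ K := by
    intro n
    simp only [hSdef]
    split
    · rename_i h
      rw [Matrix.trace_sum]
      calc ∑ i ∈ τ ⟨n, h⟩, (Matrix.vecMulVec (φ ⟨n, h⟩ i) (φ ⟨n, h⟩ i)).trace
          ≤ ∑ _i ∈ τ ⟨n, h⟩, (1:ℝ) := by
            apply Finset.sum_le_sum
            intro i hi
            have : (Matrix.vecMulVec (φ ⟨n, h⟩ i) (φ ⟨n, h⟩ i)).trace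
                = ∑ j, (φ ⟨n, h⟩ i j)^2 := by
              simp [Matrix.trace, Matrix.diag, Matrix.vecMulVec_apply, pow_two]
            rw [this]
            exact hφ ⟨n, h⟩ i hi
        _ = (τ ⟨n, h⟩).card := by simp
        _ ≤ K := by exact_mod_cast hτ ⟨n, h⟩
    · simp
  -- invariants
  have key : ∀ n, (g n).IsHermitian ∧ (∀ v : Fin d → ℝ, γ * (v ⬝ᵥ v) ≤ v ⬝ᵥ (g n) *ᵥ v)
      ∧ (g n).trace ≤ γ * d + K * n := by
    intro n
    induction n with
    | zero =>
      refine ⟨?_, ?_, ?_⟩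
      · rw [hg0]
        unfold Matrix.IsHermitian
        rw [Matrix.conjTranspose_smul, Matrix.conjTranspose_one]
        simp
      · intro v
        rw [hg0]
        simp [Matrix.smul_mulVec, dotProduct_smul, Matrix.one_mulVec,
          smul_eq_mul]
      · rw [hg0]
        simp [Matrix.trace_smul, Matrix.trace_one]
    | succ n ih =>
      obtain ⟨ihh, ihq, iht⟩ := ih
      rcases lt_or_ge n T with h | h
      · rw [hgsucc n h]
        refine ⟨ihh.add (hSpsd n).isHermitian, ?_, ?_⟩
        · intro v
          rw [Matrix.add_mulVec, dotProduct_add]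
          have hnn : 0 ≤ v ⬝ᵥ (S n) *ᵥ v := by
            have := (hSpsd n).dotProduct_mulVec_nonneg v
            simpa using this
          linarith [ihq v]
        · rw [Matrix.trace_add]
          have := hStr n
          push_cast
          push_cast at iht
          linarith
      · rw [hgstall n h]
        refine ⟨ihh, ihq, ?_⟩
        have hK : (0:ℝ) ≤ K := Nat.cast_nonneg K
        push_cast
        push_cast at iht
        linarith
  have hPD : ∀ n, (g n).PosDef := by
    intro n
    refine Matrix.PosDef.of_dotProduct_mulVec_pos (key n).1 (fun x hx => ?_)
    have hxx : 0 < x ⬝ᵥ x := by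
      obtain ⟨i, hi⟩ := Function.ne_iff.mp hx
      apply Finset.sum_pos'
      · intro j _; exact mul_self_nonneg (x j)
      · exact ⟨i, Finset.mem_univ i, mul_self_pos.mpr hi⟩
    have := (key n).2.1 x
    have : 0 < x ⬝ᵥ (g n) *ᵥ x := lt_of_lt_of_le (by positivity) this
    simpa using this
  -- per-round quantities
  set xh : ℕ → ℝ := fun n =>
    if h : n < T then ∑ i ∈ τ ⟨n, h⟩, φ ⟨n, h⟩ i ⬝ᵥ (g n)⁻¹ *ᵥ φ ⟨n, h⟩ i else 0
    with hxhdef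
  have hxh_nonneg : ∀ n, 0 ≤ xh n := by
    intro n
    simp only [hxhdef]
    split
    · rename_i h
      apply Finset.sum_nonneg
      intro i _
      have := (hPD n).inv.posSemidef.dotProduct_mulVec_nonneg (φ ⟨n, h⟩ i)
      simpa using this
    · exact le_rfl
  have hxh_le_one : ∀ n, xh n ≤ 1 := by
    intro n
    simp only [hxhdef]
    split
    · rename_i h
      have hbound : ∀ i ∈ τ ⟨n, h⟩, φ ⟨n, h⟩ i ⬝ᵥ (g n)⁻¹ *ᵥ φ ⟨n, h⟩ i ≤ 1/γ := by
        intro i hi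
        have hq := ellip_quadInvBound γ hγ (g n) (hPD n) (key n).2.1 (φ ⟨n, h⟩ i)
        have hφφ : φ ⟨n, h⟩ i ⬝ᵥ φ ⟨n, h⟩ i ≤ 1 := by
          have := hφ ⟨n, h⟩ i hi
          simpa [dotProduct, pow_two] using this
        calc φ ⟨n, h⟩ i ⬝ᵥ (g n)⁻¹ *ᵥ φ ⟨n, h⟩ i
            ≤ (φ ⟨n, h⟩ i ⬝ᵥ φ ⟨n, h⟩ i)/γ := hq
          _ ≤ 1/γ := by gcongr
      calc ∑ i ∈ τ ⟨n, h⟩, φ ⟨n, h⟩ i ⬝ᵥ (g n)⁻¹ *ᵥ φ ⟨n, h⟩ i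
          ≤ ∑ _i ∈ τ ⟨n, h⟩, 1/γ := Finset.sum_le_sum hbound
        _ = (τ ⟨n, h⟩).card * (1/γ) := by rw [Finset.sum_const, nsmul_eq_mul]
        _ ≤ K * (1/γ) := by
            apply mul_le_mul_of_nonneg_right _ (by positivity)
            exact_mod_cast hτ ⟨n, h⟩
        _ ≤ 1 := by rw [mul_one_div, div_le_one hγ]; exact hγK
    · exact zero_le_one
  have hdetstep : ∀ n, n < T → (g n).det * (1 + xh n) ≤ (g (n+1)).det := by
    intro n h
    have hmain := ellip_detStep (g n) (S n) (hPD n) (hSpsd n)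
    have htr : ((g n)⁻¹ * S n).trace = xh n := by
      simp only [hSdef, hxhdef, dif_pos h]
      rw [Matrix.mul_sum, Matrix.trace_sum]
      exact Finset.sum_congr rfl (fun i _ => ellip_traceMul _ _)
    rw [htr, ← hgsucc n h] at hmain
    exact hmain
  have hdetpos : ∀ n, 0 < (g n).det := fun n => (hPD n).det_pos
  have hlog : ∀ n, n < T →
      Real.log (1 + xh n) ≤ Real.log ((g (n+1)).det) - Real.log ((g n).det) := by
    intro n h
    have hx1 : (0:ℝ) < 1 + xh n := by linarith [hxh_nonneg n]
    have h1 : 0 < (g n).det * (1 + xh n) := mul_pos (hdetpos n) hx1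
    have h2 := Real.log_le_log h1 (hdetstep n h)
    rw [Real.log_mul (hdetpos n).ne' hx1.ne'] at h2
    linarith
  have hsum1 : ∑ n ∈ Finset.range T, Real.log (1 + xh n)
      ≤ Real.log ((g T).det) - Real.log ((g 0).det) := by
    calc ∑ n ∈ Finset.range T, Real.log (1 + xh n)
        ≤ ∑ n ∈ Finset.range T,
            (Real.log ((g (n+1)).det) - Real.log ((g n).det)) :=
          Finset.sum_le_sum (fun n hn => hlog n (Finset.mem_range.mp hn))
      _ = Real.log ((g T).det) - Real.log ((g 0).det) :=
          Finset.sum_range_sub (fun n => Real.log ((g n).det)) T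
  have hlhseq : ∑ t : Fin T, ∑ i ∈ τ t, φ t i ⬝ᵥ (G t.castSucc)⁻¹.mulVec (φ t i)
      = ∑ n ∈ Finset.range T, xh n := by
    rw [← Fin.sum_univ_eq_sum_range xh T]
    apply Finset.sum_congr rfl
    intro t _
    have h2 : g (t:ℕ) = G t.castSucc := by
      rw [hgval _ (le_of_lt t.isLt)]
      exact congrArg G (Fin.ext rfl)
    simp only [hxhdef, dif_pos t.isLt, Fin.eta, h2]
  have hxsum : ∑ n ∈ Finset.range T, xh n
      ≤ 2 * (Real.log ((g T).det) - Real.log ((g 0).det)) := by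
    calc ∑ n ∈ Finset.range T, xh n
        ≤ ∑ n ∈ Finset.range T, 2 * Real.log (1 + xh n) :=
          Finset.sum_le_sum (fun n _ => ellip_twoLog _ (hxh_nonneg n) (hxh_le_one n))
      _ = 2 * ∑ n ∈ Finset.range T, Real.log (1 + xh n) := by rw [Finset.mul_sum]
      _ ≤ 2 * (Real.log ((g T).det) - Real.log ((g 0).det)) := by linarith [hsum1]
  have hlog0 : Real.log ((g 0).det) = d * Real.log γ := by
    rw [hg0, Matrix.det_smul, Matrix.det_one, mul_one]
    simp [Real.log_pow]
  have hdR : (0:ℝ) < d := by exact_mod_cast hd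
  have htrT : (g T).trace ≤ γ * d + K * T := (key T).2.2
  have hdiag : ∀ i, γ ≤ (g T) i i := by
    intro i
    have hq := (key T).2.1 (Pi.single i 1)
    have hss : (Pi.single i 1 : Fin d → ℝ) ⬝ᵥ Pi.single i 1 = 1 := by
      simp [dotProduct, Pi.single_apply]
    have hmv : (Pi.single i 1 : Fin d → ℝ) ⬝ᵥ (g T) *ᵥ Pi.single i 1 = (g T) i i := by
      simp [dotProduct, Matrix.mulVec, Pi.single_apply, Finset.mul_sum]
    rw [hss, hmv, mul_one] at hq
    exact hq
  have htrpos : 0 < (g T).trace := by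
    have : (0:ℝ) < ∑ i : Fin d, γ := by
      rw [Finset.sum_const, Finset.card_univ, Fintype.card_fin, nsmul_eq_mul]
      positivity
    calc (0:ℝ) < ∑ i : Fin d, γ := this
      _ ≤ ∑ i : Fin d, (g T) i i := Finset.sum_le_sum (fun i _ => hdiag i)
      _ = (g T).trace := rfl
  have hratpos : (0:ℝ) < (γ * d + K * T) / d := by positivity
  have hdT : Real.log ((g T).det) ≤ d * Real.log ((γ * d + K * T) / d) := by
    have h1 : (g T).det ≤ ((g T).trace / d) ^ d := ellip_detTrace hd _ (hPD T).posSemidef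
    have h2 : ((g T).trace / d) ^ d ≤ ((γ * d + K * T) / d) ^ d := by
      apply pow_le_pow_left₀ (by positivity)
      gcongr
    have h3 := Real.log_le_log (hdetpos T) (h1.trans h2)
    rw [Real.log_pow] at h3
    exact h3
  have hcalc : Real.log ((γ * d + K * T) / d) - Real.log γ
      = Real.log (1 + K * T / (γ * d)) := by
    rw [← Real.log_div hratpos.ne' hγ.ne']
    congr 1
    rw [div_div, div_eq_iff (by positivity : (d:ℝ) * γ ≠ 0), add_mul, one_mul,
      div_mul_eq_mul_div, mul_comm γ (d:ℝ), mul_div_assoc,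
      div_self (by positivity : (d:ℝ) * γ ≠ 0), mul_one]
  rw [hlhseq]
  have hfin : 2 * (Real.log ((g T).det) - Real.log ((g 0).det))
      ≤ 2 * d * Real.log (1 + K * T / (γ * d)) := by
    rw [hlog0]
    have h1 : Real.log ((g T).det) - d * Real.log γ
        ≤ d * Real.log ((γ * d + K * T) / d) - d * Real.log γ := by linarith
    have h2 : d * Real.log ((γ * d + K * T) / d) - d * Real.log γ
        = d * Real.log (1 + K * T / (γ * d)) := by
      rw [← hcalc]; ring
    linarith
  linarith [hxsum]
end

section
/- Let G = γ I + sum_{s=1}^{t-1} x_s x_s^T with γ > 0 and ||x_s||_2^2 <= L for all s. Then det(G) <= (γ + (t-1) L / d)^d. -/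
open Finset Matrix

private lemma amgm_prod_le {d : ℕ} (hd : 0 < d) (z : Fin d → ℝ) (hz : ∀ i, 0 ≤ z i) :
    ∏ i, z i ≤ ((∑ i, z i) / d) ^ d := by
  have h := Real.geom_mean_le_arith_mean Finset.univ (fun _ => (1 : ℝ)) z
    (fun _ _ => zero_le_one) (by simpa using (by exact_mod_cast hd : (0:ℝ) < d))
    (fun i _ => hz i)
  simp only [Real.rpow_one, one_mul, Finset.sum_const, Finset.card_univ, Fintype.card_fin,
    nsmul_eq_mul, mul_one] at h
  have hprod : 0 ≤ ∏ i, z i := Finset.prod_nonneg fun i _ => hz i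
  have key : ((∏ i, z i) ^ ((d : ℝ))⁻¹) ^ d = ∏ i, z i := by
    rw [← Real.rpow_natCast (_ ^ _) d, ← Real.rpow_mul hprod,
      inv_mul_cancel₀ (by exact_mod_cast hd.ne'), Real.rpow_one]
  calc ∏ i, z i = ((∏ i, z i) ^ ((d : ℝ))⁻¹) ^ d := key.symm
    _ ≤ ((∑ i, z i) / d) ^ d := pow_le_pow_left₀ (Real.rpow_nonneg hprod _) h d

private lemma sum_eigenvalues_eq_trace {d : ℕ} {A : Matrix (Fin d) (Fin d) ℝ}
    (hA : A.IsHermitian) : ∑ i, hA.eigenvalues i = A.trace := by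
  nth_rewrite 2 [hA.spectral_theorem]
  rw [Unitary.conjStarAlgAut_apply, Matrix.trace_mul_cycle]
  have : (star (hA.eigenvectorUnitary : Matrix (Fin d) (Fin d) ℝ)) *
      (hA.eigenvectorUnitary : Matrix (Fin d) (Fin d) ℝ) = 1 :=
    Matrix.mem_unitaryGroup_iff'.mp hA.eigenvectorUnitary.2
  rw [this, one_mul, Matrix.trace_diagonal]
  simp

theorem stmt_10 (d n : ℕ) (γ L : ℝ) (hγ : 0 < γ) (x : Fin n → Fin d → ℝ)
    (hx : ∀ s, ∑ j, (x s j) ^ 2 ≤ L) :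
    (γ • (1 : Matrix (Fin d) (Fin d) ℝ) + ∑ s, Matrix.vecMulVec (x s) (x s)).det ≤
      (γ + n * L / d) ^ d := by
  rcases Nat.eq_zero_or_pos d with hd | hd
  · subst hd
    simp [Matrix.det_isEmpty]
  set A := γ • (1 : Matrix (Fin d) (Fin d) ℝ) + ∑ s, Matrix.vecMulVec (x s) (x s) with hAdef
  have hpsd : A.PosSemidef := by
    apply Matrix.PosSemidef.add
    · rw [Matrix.smul_one_eq_diagonal]
      exact Matrix.PosSemidef.diagonal (fun i => hγ.le)
    · refine Finset.sum_induction _ (fun M : Matrix (Fin d) (Fin d) ℝ => M.PosSemidef)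
        (fun a b ha hb => ha.add hb) Matrix.PosSemidef.zero (fun s _ => ?_)
      have : Matrix.vecMulVec (x s) (x s) =
          Matrix.conjTranspose (Matrix.replicateRow Unit (x s)) * Matrix.replicateRow Unit (x s) := by
        ext i j
        simp [Matrix.vecMulVec_apply, Matrix.mul_apply, Matrix.replicateRow_apply]
      rw [this]
      exact Matrix.posSemidef_conjTranspose_mul_self _
  have hH := hpsd.isHermitian
  have hdet : A.det = ∏ i, hH.eigenvalues i := by
    have := hH.det_eq_prod_eigenvalues
    simpa using this
  have htr : ∑ i, hH.eigenvalues i = A.trace := sum_eigenvalues_eq_trace hH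
  have htrace_le : A.trace ≤ γ * d + n * L := by
    rw [hAdef, Matrix.trace_add, Matrix.trace_smul, Matrix.trace_one, Matrix.trace_sum]
    have : ∀ s : Fin n, (Matrix.vecMulVec (x s) (x s)).trace ≤ L := by
      intro s
      have : (Matrix.vecMulVec (x s) (x s)).trace = ∑ j, (x s j) ^ 2 := by
        simp [Matrix.trace, Matrix.diag, Matrix.vecMulVec_apply, sq]
      rw [this]; exact hx s
    calc γ • (Fintype.card (Fin d) : ℝ) + ∑ s, (Matrix.vecMulVec (x s) (x s)).trace
        ≤ γ * d + ∑ s : Fin n, L := by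
          simp only [smul_eq_mul, Fintype.card_fin]
          exact add_le_add le_rfl (Finset.sum_le_sum fun s _ => this s)
      _ = γ * d + n * L := by simp [mul_comm]
  have hdpos : (0:ℝ) < d := by exact_mod_cast hd
  have hmean : A.trace / d ≤ γ + n * L / d := by
    rw [div_le_iff₀ hdpos, add_mul, div_mul_cancel₀ _ hdpos.ne']
    linarith [htrace_le]
  have htr_nonneg : 0 ≤ A.trace := by
    rw [← htr]; exact Finset.sum_nonneg fun i _ => hpsd.eigenvalues_nonneg i
  calc A.det = ∏ i, hH.eigenvalues i := hdet
    _ ≤ ((∑ i, hH.eigenvalues i) / d) ^ d :=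
        amgm_prod_le hd _ (fun i => hpsd.eigenvalues_nonneg i)
    _ = (A.trace / d) ^ d := by rw [htr]
    _ ≤ (γ + n * L / d) ^ d :=
        pow_le_pow_left₀ (div_nonneg htr_nonneg hdpos.le) hmean d
end

section
/- Suppose for every t in [T] and arm i the inequality μ_{t,i} <= ū_{t,i} <= μ_{t,i} + c_{t,i} holds with c_{t,i} >= 0, the reward r(S; ·) is monotone nondecreasing in each coordinate and satisfies |r(S;μ') - r(S;μ)| <= B_1 sum_i p_i(μ,S)|μ_i - μ'_i| with p_i(μ,S) in [0,1]. If S_t maximizes r(S; ū_t) up to an α factor (r(S_t; ū_t) >= α max_S r(S; ū_t)), then α r(S_t^*; μ_t) - r(S_t; μ_t) <= B_1 sum_i p_i(μ_t, S_t) c_{t,i}, where S_t^* maximizes r(·; μ_t). -/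
theorem stmt_11 {𝒮 : Type*} (m : ℕ) (r : 𝒮 → (Fin m → ℝ) → ℝ)
    (p : (Fin m → ℝ) → 𝒮 → Fin m → ℝ) (B1 α : ℝ) (hB1 : 0 ≤ B1) (hα : 0 ≤ α)
    (hmono : ∀ S (ν ν' : Fin m → ℝ), (∀ i, ν i ≤ ν' i) → r S ν ≤ r S ν')
    (hsmooth : ∀ S (ν ν' : Fin m → ℝ),
      |r S ν' - r S ν| ≤ B1 * ∑ i, p ν S i * |ν i - ν' i|)
    (hp : ∀ ν S i, p ν S i ∈ Set.Icc (0:ℝ) 1)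
    (μ ubar c : Fin m → ℝ) (hc : ∀ i, 0 ≤ c i)
    (hub : ∀ i, μ i ≤ ubar i ∧ ubar i ≤ μ i + c i)
    (St Sstar : 𝒮)
    (hSt : ∀ S, α * r S ubar ≤ r St ubar)
    (hSstar : ∀ S, r S μ ≤ r Sstar μ) :
    α * r Sstar μ - r St μ ≤ B1 * ∑ i, p μ St i * c i := by
  have h1 : α * r Sstar μ ≤ α * r Sstar ubar :=
    mul_le_mul_of_nonneg_left (hmono _ _ _ fun i => (hub i).1) hα
  have h2 : α * r Sstar ubar ≤ r St ubar := hSt _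
  have h3 : r St ubar - r St μ ≤ B1 * ∑ i, p μ St i * |μ i - ubar i| :=
    (le_abs_self _).trans (hsmooth St μ ubar)
  have h4 : B1 * ∑ i, p μ St i * |μ i - ubar i| ≤ B1 * ∑ i, p μ St i * c i := by
    apply mul_le_mul_of_nonneg_left _ hB1
    apply Finset.sum_le_sum
    intro i _
    apply mul_le_mul_of_nonneg_left _ (hp μ St i).1
    rw [abs_sub_comm, abs_of_nonneg (sub_nonneg.2 (hub i).1)]
    linarith [(hub i).2]
  linarith
end
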